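/- Let A = K[x²,xy,y²,x³,x²y,xy²,y³,z] ⊆ K[x,y,z], char K = 0, with ∂₁ = ∂/∂z, ∂₂ = y·∂/∂x, ∂₃ = x·∂/∂y restricted to A. Then ∂₁, ∂₁+∂₂, and ∂₁+∂₃ are locally nilpotent derivations of A, each admitting z as a slice, and the intersection of their kernels equals K. Hence the modified Makar-Limanov invariant ML*(A) = K. -/

import Mathlib

open MvPolynomial

set_option synthInstance.maxHeartbeats 1000000
set_option maxHeartbeats 2000000

/-- The generating monomials `x², xy, y², x³, x²y, xy², y³, z` inside `K[x,y,z]`. -/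
def genMonomials (K : Type*) [CommRing K] : Set (MvPolynomial (Fin 3) K) :=
  {X 0 ^ 2, X 0 * X 1, X 1 ^ 2, X 0 ^ 3, X 0 ^ 2 * X 1, X 0 * X 1 ^ 2, X 1 ^ 3, X 2}

/-- The algebra `A = K[x²,xy,y²,x³,x²y,xy²,y³,z] ⊆ K[x,y,z]`. -/
noncomputable def AA (K : Type*) [CommRing K] : Subalgebra K (MvPolynomial (Fin 3) K) :=
  Algebra.adjoin K (genMonomials K)

section Aux

variable {K : Type*} [CommRing K]

lemma coeff_pderiv' (i : Fin 3) (d : Fin 3 →₀ ℕ) (F : MvPolynomial (Fin 3) K) :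
    coeff d (pderiv i F) = ((d i + 1 : ℕ) : K) * coeff (d + Finsupp.single i 1) F := by
  induction F using MvPolynomial.induction_on' with
  | monomial e c =>
    rw [pderiv_monomial]
    by_cases he : e = d + Finsupp.single i 1
    · subst he
      rw [add_tsub_cancel_right]
      simp [coeff_monomial, Finsupp.add_apply, Finsupp.single_apply, mul_comm]
    · rw [coeff_monomial, coeff_monomial, if_neg he]
      by_cases hei : e i = 0
      · simp [hei]
      · rw [if_neg, mul_zero]
        intro h'
        apply he
        ext a
        have := DFunLike.congr_fun h' a
        simp only [Finsupp.tsub_apply, Finsupp.single_apply, Finsupp.add_apply] at this ⊢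
        by_cases hia : i = a
        · subst hia; simp at this ⊢; omega
        · simp only [if_neg hia] at this ⊢; omega
  | add p q hp hq => simp [map_add, hp, hq, mul_add]

lemma ln_aux (L : MvPolynomial (Fin 3) K →ₗ[K] MvPolynomial (Fin 3) K)
    (w : (Fin 3 →₀ ℕ) → ℕ)
    (hmon : ∀ d c, ∀ d' ∈ (L ((monomial d) c)).support, w d' < w d) :
    ∀ n (p : MvPolynomial (Fin 3) K), (∀ d ∈ p.support, w d < n) → (L ^ n) p = 0 := by
  intro n
  induction n with
  | zero =>
    intro p hp
    have : p = 0 := by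
      rw [← MvPolynomial.support_eq_empty]
      by_contra h
      obtain ⟨d, hd⟩ := Finset.nonempty_iff_ne_empty.mpr h
      exact absurd (hp d hd) (by omega)
    simp [this]
  | succ n ih =>
    intro p hp
    rw [pow_succ, Module.End.mul_apply]
    apply ih
    intro d' hd'
    classical
    rw [MvPolynomial.as_sum p, map_sum] at hd'
    obtain ⟨d, hd, hmem⟩ := Finset.mem_biUnion.mp (MvPolynomial.support_sum hd')
    exact lt_of_lt_of_le (hmon d _ d' hmem) (Nat.lt_succ_iff.mp (hp d hd))

/-- `p ↦ ∂p/∂z + X j * ∂p/∂i` as a linear map. -/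
noncomputable def Lmix (i j : Fin 3) :
    MvPolynomial (Fin 3) K →ₗ[K] MvPolynomial (Fin 3) K :=
  (pderiv 2).toLinearMap + (LinearMap.mulLeft K (X j)).comp (pderiv i).toLinearMap

lemma Lmix_apply (i j : Fin 3) (p : MvPolynomial (Fin 3) K) :
    Lmix i j p = pderiv 2 p + X j * pderiv i p := rfl

lemma hmon_L1 : ∀ (d : Fin 3 →₀ ℕ) (c : K),
    ∀ d' ∈ ((pderiv 2).toLinearMap ((monomial d) c)).support, d' 2 < d 2 := by
  intro d c d' hd'
  have h1 := MvPolynomial.mem_support_iff.mp hd'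
  rw [Derivation.coeFn_coe, pderiv_monomial, coeff_monomial] at h1
  split_ifs at h1 with h
  · have hd2 : d 2 ≠ 0 := fun h0 => h1 (by simp [h0])
    subst h
    simp only [Finsupp.tsub_apply, Finsupp.single_apply, if_true]
    omega
  · exact absurd rfl h1

lemma hmon_Lmix (i j : Fin 3) (hji : j ≠ i) (hj2 : j ≠ 2) (hi2 : i ≠ 2) :
    ∀ (d : Fin 3 →₀ ℕ) (c : K),
    ∀ d' ∈ ((Lmix i j) ((monomial d) c)).support, d' i + d' 2 < d i + d 2 := by
  intro d c d' hd'
  rw [Lmix_apply, pderiv_monomial, pderiv_monomial, X, monomial_mul, one_mul] at hd'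
  rcases Finset.mem_union.mp (MvPolynomial.support_add hd') with h | h
  · have h1 := MvPolynomial.mem_support_iff.mp h
    rw [coeff_monomial] at h1
    split_ifs at h1 with he
    · have hd2 : d 2 ≠ 0 := fun h0 => h1 (by simp [h0])
      subst he
      simp only [Finsupp.tsub_apply, Finsupp.single_apply, if_true,
        if_neg (Ne.symm hi2)]
      omega
    · exact absurd rfl h1
  · have h1 := MvPolynomial.mem_support_iff.mp h
    rw [coeff_monomial] at h1
    split_ifs at h1 with he
    · have hdi : d i ≠ 0 := fun h0 => h1 (by simp [h0])
      subst he
      simp only [Finsupp.add_apply, Finsupp.tsub_apply, Finsupp.single_apply, if_true,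
        if_neg hji, if_neg hj2, if_neg (Ne.symm hi2)]
      omega
    · exact absurd rfl h1

end Aux

section AuxField

variable {K : Type*} [Field K] [CharZero K]

lemma eq_C_of_pderiv_eq_zero (F : MvPolynomial (Fin 3) K)
    (h : ∀ i : Fin 3, pderiv i F = 0) : F = C (coeff 0 F) := by
  apply MvPolynomial.ext
  intro d
  by_cases hd : d = 0
  · subst hd; simp
  · rw [coeff_C, if_neg (fun h0 => hd h0.symm)]
    obtain ⟨i, hi⟩ := Finsupp.ne_iff.mp hd
    simp only [Finsupp.coe_zero, Pi.zero_apply] at hi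
    set d' := d - Finsupp.single i 1 with hd'
    have hdd : d' + Finsupp.single i 1 = d := by
      ext a
      simp only [Finsupp.add_apply, Finsupp.tsub_apply, Finsupp.single_apply, hd']
      by_cases hia : i = a
      · subst hia; simp; omega
      · simp [hia]
    have := coeff_pderiv' i d' F
    rw [h i, hdd, coeff_zero] at this
    have hc : ((d' i + 1 : ℕ) : K) ≠ 0 := Nat.cast_ne_zero.mpr (by omega)
    exact (mul_eq_zero.mp this.symm).resolve_left hc

lemma coe_pow_comm (D : Derivation K ↥(AA K) ↥(AA K))
    (L : MvPolynomial (Fin 3) K →ₗ[K] MvPolynomial (Fin 3) K)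
    (h : ∀ f : ↥(AA K), ((D f : ↥(AA K)) : MvPolynomial (Fin 3) K) = L (f : MvPolynomial (Fin 3) K)) :
    ∀ (m : ℕ) (g : ↥(AA K)),
      (((D.toLinearMap ^ m) g : ↥(AA K)) : MvPolynomial (Fin 3) K) = (L ^ m) (g : MvPolynomial (Fin 3) K) := by
  intro m
  induction m with
  | zero => intro g; simp
  | succ m ih =>
    intro g
    rw [pow_succ', pow_succ', Module.End.mul_apply, Module.End.mul_apply]
    exact (h _).trans (congrArg L (ih g))

lemma locNilp_of (D : Derivation K ↥(AA K) ↥(AA K))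
    (L : MvPolynomial (Fin 3) K →ₗ[K] MvPolynomial (Fin 3) K)
    (w : (Fin 3 →₀ ℕ) → ℕ)
    (hmon : ∀ d c, ∀ d' ∈ (L ((monomial d) c)).support, w d' < w d)
    (h : ∀ f : ↥(AA K), ((D f : ↥(AA K)) : MvPolynomial (Fin 3) K) = L (f : MvPolynomial (Fin 3) K)) :
    ∀ g, ∃ m : ℕ, (D.toLinearMap ^ m) g = 0 := by
  intro g
  refine ⟨(g : MvPolynomial (Fin 3) K).support.sup w + 1, Subtype.ext ?_⟩
  rw [coe_pow_comm D L h]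
  exact ln_aux L w hmon _ _ (fun d hd => Nat.lt_succ_of_le (Finset.le_sup hd))

end AuxField

/-- Let `A = K[x²,xy,y²,x³,x²y,xy²,y³,z]`, `char K = 0`, with `∂₁ = ∂/∂z`, `∂₂ = y∂/∂x`,
`∂₃ = x∂/∂y` restricted to `A`. Then `∂₁`, `∂₁+∂₂` and `∂₁+∂₃` are locally nilpotent
derivations of `A`, each admitting `z` as a slice, and the intersection of their kernels
equals `K`; hence the modified Makar-Limanov invariant `ML*(A)` equals `K`. -/
theorem MLstar_of_A_trivial (K : Type*) [Field K] [CharZero K]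
    (D₁ D₂ D₃ : Derivation K ↥(AA K) ↥(AA K))
    (h₁ : ∀ f : ↥(AA K),
      (D₁ f : MvPolynomial (Fin 3) K) = pderiv 2 (f : MvPolynomial (Fin 3) K))
    (h₂ : ∀ f : ↥(AA K),
      (D₂ f : MvPolynomial (Fin 3) K) = X 1 * pderiv 0 (f : MvPolynomial (Fin 3) K))
    (h₃ : ∀ f : ↥(AA K),
      (D₃ f : MvPolynomial (Fin 3) K) = X 0 * pderiv 1 (f : MvPolynomial (Fin 3) K))
    (zA : ↥(AA K)) (hz : (zA : MvPolynomial (Fin 3) K) = X 2) :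
    (∀ g, ∃ m : ℕ, (D₁.toLinearMap ^ m) g = 0) ∧
    (∀ g, ∃ m : ℕ, ((D₁ + D₂).toLinearMap ^ m) g = 0) ∧
    (∀ g, ∃ m : ℕ, ((D₁ + D₃).toLinearMap ^ m) g = 0) ∧
    D₁ zA = 1 ∧ (D₁ + D₂) zA = 1 ∧ (D₁ + D₃) zA = 1 ∧
    (∀ f : ↥(AA K), D₁ f = 0 → (D₁ + D₂) f = 0 → (D₁ + D₃) f = 0 →
      ∃ c : K, f = algebraMap K ↥(AA K) c) ∧
    (∀ f : ↥(AA K),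
      (∀ D : Derivation K ↥(AA K) ↥(AA K),
        (∀ g, ∃ m : ℕ, (D.toLinearMap ^ m) g = 0) → (∃ s, D s = 1) → D f = 0) →
      ∃ c : K, f = algebraMap K ↥(AA K) c) := by
  -- coercion descriptions of the sum derivations
  have h₁₂ : ∀ f : ↥(AA K),
      (((D₁ + D₂) f : ↥(AA K)) : MvPolynomial (Fin 3) K)
        = Lmix 0 1 (f : MvPolynomial (Fin 3) K) := by
    intro f
    rw [Derivation.add_apply, AddMemClass.coe_add, h₁ f, h₂ f, Lmix_apply]
  have h₁₃ : ∀ f : ↥(AA K),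
      (((D₁ + D₃) f : ↥(AA K)) : MvPolynomial (Fin 3) K)
        = Lmix 1 0 (f : MvPolynomial (Fin 3) K) := by
    intro f
    rw [Derivation.add_apply, AddMemClass.coe_add, h₁ f, h₃ f, Lmix_apply]
  -- local nilpotency
  have ln1 : ∀ g, ∃ m : ℕ, (D₁.toLinearMap ^ m) g = 0 :=
    locNilp_of D₁ (pderiv 2).toLinearMap (fun d => d 2) hmon_L1 h₁
  have ln2 : ∀ g, ∃ m : ℕ, ((D₁ + D₂).toLinearMap ^ m) g = 0 :=
    locNilp_of (D₁ + D₂) (Lmix 0 1) (fun d => d 0 + d 2)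
      (hmon_Lmix 0 1 (by decide) (by decide) (by decide)) h₁₂
  have ln3 : ∀ g, ∃ m : ℕ, ((D₁ + D₃).toLinearMap ^ m) g = 0 :=
    locNilp_of (D₁ + D₃) (Lmix 1 0) (fun d => d 1 + d 2)
      (hmon_Lmix 1 0 (by decide) (by decide) (by decide)) h₁₃
  -- slices
  have s1 : D₁ zA = 1 := by
    apply Subtype.ext
    rw [h₁ zA, hz, pderiv_X_self]
    rfl
  have s2 : (D₁ + D₂) zA = 1 := by
    apply Subtype.ext
    rw [h₁₂ zA, hz, Lmix_apply, pderiv_X_self, pderiv_X_of_ne (by decide : (2 : Fin 3) ≠ 0),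
      mul_zero, add_zero]
    rfl
  have s3 : (D₁ + D₃) zA = 1 := by
    apply Subtype.ext
    rw [h₁₃ zA, hz, Lmix_apply, pderiv_X_self, pderiv_X_of_ne (by decide : (2 : Fin 3) ≠ 1),
      mul_zero, add_zero]
    rfl
  -- kernel intersection
  have ker : ∀ f : ↥(AA K), D₁ f = 0 → (D₁ + D₂) f = 0 → (D₁ + D₃) f = 0 →
      ∃ c : K, f = algebraMap K ↥(AA K) c := by
    intro f k1 k12 k13
    set F : MvPolynomial (Fin 3) K := (f : MvPolynomial (Fin 3) K) with hF
    have e2 : pderiv 2 F = 0 := by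
      rw [← h₁ f, k1, ZeroMemClass.coe_zero]
    have e0 : pderiv 0 F = 0 := by
      have := h₁₂ f
      rw [k12, ZeroMemClass.coe_zero, Lmix_apply, e2, zero_add] at this
      exact ((mul_eq_zero.mp this.symm).resolve_left (MvPolynomial.X_ne_zero 1))
    have e1 : pderiv 1 F = 0 := by
      have := h₁₃ f
      rw [k13, ZeroMemClass.coe_zero, Lmix_apply, e2, zero_add] at this
      exact ((mul_eq_zero.mp this.symm).resolve_left (MvPolynomial.X_ne_zero 0))
    have hall : ∀ i : Fin 3, pderiv i F = 0 := by
      intro i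
      fin_cases i <;> assumption
    refine ⟨coeff 0 F, Subtype.ext ?_⟩
    rw [← hF, eq_C_of_pderiv_eq_zero F hall]
    simp [MvPolynomial.algebraMap_eq]
  refine ⟨ln1, ln2, ln3, s1, s2, s3, ker, ?_⟩
  intro f hf
  exact ker f (hf D₁ ln1 ⟨zA, s1⟩) (hf (D₁ + D₂) ln2 ⟨zA, s2⟩) (hf (D₁ + D₃) ln3 ⟨zA, s3⟩)
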